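/- Let A be an f-adic ring and let γ : A → Â be the canonical map to its completion. Then: (i) if A₀ is a bounded open subring of A, then the topological closure cl(γ(A₀)) is a bounded open subring of Â; (ii) if B₀ is a bounded open subring of Â, then γ⁻¹(B₀) is a bounded open subring of A. -/

import Mathlib

open Filter Topology

/-- A subset `S` of a topological ring is bounded if for every neighbourhood `U` of `0`
there is a neighbourhood `V` of `0` with `V · S ⊆ U`. -/
def IsBoundedSubset {A : Type*} [CommRing A] [TopologicalSpace A] (S : Set A) : Prop :=
  ∀ U ∈ 𝓝 (0 : A), ∃ V ∈ 𝓝 (0 : A), ∀ v ∈ V, ∀ s ∈ S, v * s ∈ U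

/-- An element of a topological ring is power-bounded if the set of its powers `aⁿ`, `n ≥ 1`,
is bounded. -/
def IsPowerBounded {A : Type*} [CommRing A] [TopologicalSpace A] (a : A) : Prop :=
  IsBoundedSubset {x : A | ∃ n : ℕ, 1 ≤ n ∧ x = a ^ n}

/-- `A°`, the set of power-bounded elements of a topological ring. -/
def powerBounded (A : Type*) [CommRing A] [TopologicalSpace A] : Set A :=
  {a : A | IsPowerBounded a}

/-- `I₀` is an ideal of definition of the subring `A₀` of the topological ring `A` if it is
finitely generated and its powers form a basis of neighbourhoods of `0` in `A`. -/
def IsIdealOfDefinition {A : Type*} [CommRing A] [TopologicalSpace A]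
    (A₀ : Subring A) (I₀ : Ideal A₀) : Prop :=
  I₀.FG ∧ (𝓝 (0 : A)).HasBasis (fun n : ℕ => 1 ≤ n)
    (fun n => ⇑A₀.subtype '' ((I₀ ^ n : Ideal A₀) : Set A₀))

/-- A ring of definition of a topological ring is an open subring admitting an ideal of
definition. -/
def IsRingOfDefinition {A : Type*} [CommRing A] [TopologicalSpace A] (A₀ : Subring A) : Prop :=
  IsOpen (A₀ : Set A) ∧ ∃ I₀ : Ideal A₀, IsIdealOfDefinition A₀ I₀

/-- A topological commutative ring is f-adic if it admits a ring of definition. -/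
def IsFAdic (A : Type*) [CommRing A] [TopologicalSpace A] : Prop :=
  ∃ A₀ : Subring A, IsRingOfDefinition A₀

/-- A subring `S` of `A` is integrally closed in `A` if every element of `A` integral
over `S` lies in `S`. -/
def IsIntegrallyClosedSubring {A : Type*} [CommRing A] (S : Subring A) : Prop :=
  ∀ x : A, IsIntegral S x → x ∈ S

theorem statement7 {A : Type*} [CommRing A] [UniformSpace A] [IsUniformAddGroup A]
    [IsTopologicalRing A] (hA : IsFAdic A)
    (γ : A →+* UniformSpace.Completion A)
    (hγ : γ = UniformSpace.Completion.coeRingHom) :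
    (∀ A₀ : Subring A, IsOpen (A₀ : Set A) → IsBoundedSubset (A₀ : Set A) →
      IsOpen (closure (⇑γ '' (A₀ : Set A))) ∧
      IsBoundedSubset (closure (⇑γ '' (A₀ : Set A)))) ∧
    (∀ B₀ : Subring (UniformSpace.Completion A),
      IsOpen (B₀ : Set (UniformSpace.Completion A)) →
      IsBoundedSubset (B₀ : Set (UniformSpace.Completion A)) →
      IsOpen ((B₀.comap γ : Subring A) : Set A) ∧
      IsBoundedSubset ((B₀.comap γ : Subring A) : Set A)) := by
  have hcont : Continuous γ := by
    rw [hγ]; exact UniformSpace.Completion.continuous_coe A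
  have hdi : IsDenseInducing ⇑γ := by
    rw [hγ]; exact UniformSpace.Completion.isDenseInducing_coe
  constructor
  · intro A₀ hopen hbd
    have hnhds : closure (⇑γ '' (A₀ : Set A)) ∈ 𝓝 (0 : UniformSpace.Completion A) := by
      have := hdi.closure_image_mem_nhds (hopen.mem_nhds A₀.zero_mem)
      rwa [map_zero] at this
    have hcl : ((A₀.map γ).topologicalClosure.toAddSubgroup : Set _)
        = closure (⇑γ '' (A₀ : Set A)) := rfl
    constructor
    · rw [← hcl]
      exact AddSubgroup.isOpen_of_mem_nhds (A₀.map γ).topologicalClosure.toAddSubgroup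
        (hcl ▸ hnhds)
    · intro U hU
      obtain ⟨W, ⟨hW, hWc⟩, hWU⟩ := (closed_nhds_basis (0 : UniformSpace.Completion A)).mem_iff.1 hU
      have hWA : γ ⁻¹' W ∈ 𝓝 (0 : A) := by
        have := hcont.continuousAt (x := (0 : A))
        rw [ContinuousAt, map_zero] at this
        exact this hW
      obtain ⟨V, hV, hVbd⟩ := hbd _ hWA
      refine ⟨closure (⇑γ '' V), by
        have := hdi.closure_image_mem_nhds hV
        rwa [map_zero] at this, ?_⟩
      intro v hv s hs
      refine hWU (hWc.closure_subset ?_)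
      exact map_mem_closure₂ continuous_mul hv hs fun a ⟨x, hx, hxe⟩ b ⟨y, hy, hye⟩ => by
        rw [← hxe, ← hye, ← map_mul]; exact hVbd x hx y hy
  · intro B₀ hopen hbd
    constructor
    · exact hopen.preimage hcont
    · intro U hU
      obtain ⟨U', hU', hU'sub⟩ : ∃ U' ∈ 𝓝 (0 : UniformSpace.Completion A), γ ⁻¹' U' ⊆ U := by
        rw [hdi.toIsInducing.nhds_eq_comap, map_zero] at hU
        exact hU
      obtain ⟨V', hV', hV'bd⟩ := hbd _ hU'
      refine ⟨γ ⁻¹' V', ?_, ?_⟩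
      · have := hcont.continuousAt (x := (0 : A))
        rw [ContinuousAt, map_zero] at this
        exact this hV'
      · intro v hv s hs
        apply hU'sub
        show γ (v * s) ∈ U'
        rw [map_mul]
        exact hV'bd _ hv _ hs
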